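/- Let x, y ∈ ℝ^d be fixed. Then x ⊕_s y tends to x + y as s → ∞; that is, the function s ↦ x ⊕_s y (defined for all s > max(‖x‖, ‖y‖)) converges to x + y along the filter of s tending to infinity. -/

import Mathlib

open Real MeasureTheory

/-- Inverse hyperbolic tangent on `(-1, 1)`. -/
noncomputable def Real.artanh' (x : ℝ) : ℝ := (1 / 2) * Real.log ((1 + x) / (1 - x))

/-- Matrix-vector multiplication viewed as a map between Euclidean spaces. -/
noncomputable def mulVecE {d d' : ℕ} (P : Matrix (Fin d') (Fin d) ℝ)
    (x : EuclideanSpace ℝ (Fin d)) : EuclideanSpace ℝ (Fin d') :=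
  (EuclideanSpace.equiv (Fin d') ℝ).symm (P.mulVec (EuclideanSpace.equiv (Fin d) ℝ x))

/-- Möbius matrix multiplication `P^{⊗_s} x` on the Poincaré ball of radius `s`.
When `P.mulVec x = 0` this evaluates to `0`, as required. -/
noncomputable def mobiusMat {d d' : ℕ} (s : ℝ) (P : Matrix (Fin d') (Fin d) ℝ)
    (x : EuclideanSpace ℝ (Fin d)) : EuclideanSpace ℝ (Fin d') :=
  (s * Real.tanh ((‖mulVecE P x‖ / ‖x‖) * Real.artanh' (‖x‖ / s)) / ‖mulVecE P x‖) • mulVecE P x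

/-- Frobenius norm of a real matrix. -/
noncomputable def frobNorm {m n : ℕ} (P : Matrix (Fin m) (Fin n) ℝ) : ℝ :=
  Real.sqrt (∑ i, ∑ j, (P i j) ^ 2)

/-- Lorentz gamma factor `γ_x = 1/√(1 - ‖x‖²/s²)`. -/
noncomputable def lorentzGamma {d : ℕ} (s : ℝ) (x : EuclideanSpace ℝ (Fin d)) : ℝ :=
  1 / Real.sqrt (1 - ‖x‖ ^ 2 / s ^ 2)

/-- Poincaré distance `d_s(x,y) = 2s·arsinh(γ_x γ_y ‖x - y‖ / s)`. -/
noncomputable def dPoin {d : ℕ} (s : ℝ) (x y : EuclideanSpace ℝ (Fin d)) : ℝ :=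
  2 * s * Real.arsinh (lorentzGamma s x * lorentzGamma s y * ‖x - y‖ / s)

/-- Möbius addition on the Poincaré ball of radius `s`. -/
noncomputable def mobiusAdd {d : ℕ} (s : ℝ) (x y : EuclideanSpace ℝ (Fin d)) :
    EuclideanSpace ℝ (Fin d) :=
  ((1 + 2 / s ^ 2 * (inner ℝ x y : ℝ) + 1 / s ^ 2 * ‖y‖ ^ 2) /
      (1 + 2 / s ^ 2 * (inner ℝ x y : ℝ) + 1 / s ^ 4 * ‖x‖ ^ 2 * ‖y‖ ^ 2)) • x +
    ((1 - 1 / s ^ 2 * ‖x‖ ^ 2) /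
      (1 + 2 / s ^ 2 * (inner ℝ x y : ℝ) + 1 / s ^ 4 * ‖x‖ ^ 2 * ‖y‖ ^ 2)) • y

/-- Exponential map at the origin of the Poincaré ball of radius `s`. -/
noncomputable def expZero {d : ℕ} (s : ℝ) (v : EuclideanSpace ℝ (Fin d)) :
    EuclideanSpace ℝ (Fin d) :=
  (s * Real.tanh (‖v‖ / s) / ‖v‖) • v

/-- Logarithmic map at the origin of the Poincaré ball of radius `s`. -/
noncomputable def logZero {d : ℕ} (s : ℝ) (y : EuclideanSpace ℝ (Fin d)) :
    EuclideanSpace ℝ (Fin d) :=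
  (s * Real.artanh' (‖y‖ / s) / ‖y‖) • y


/-- `x ⊕_s y → x + y` as `s → ∞`. -/
theorem stmt13 {d : ℕ} (x y : EuclideanSpace ℝ (Fin d)) :
    Filter.Tendsto (fun s : ℝ => mobiusAdd s x y) Filter.atTop (nhds (x + y)) := by
  have h2 : Filter.Tendsto (fun s : ℝ => 1 / s ^ 2) Filter.atTop (nhds 0) := by
    have h : Filter.Tendsto (fun s : ℝ => s ^ 2) Filter.atTop Filter.atTop :=
      Filter.tendsto_pow_atTop (by norm_num)
    simpa [one_div, Pi.inv_def] using h.inv_tendsto_atTop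
  have h4 : Filter.Tendsto (fun s : ℝ => 1 / s ^ 4) Filter.atTop (nhds 0) := by
    have h : Filter.Tendsto (fun s : ℝ => s ^ 4) Filter.atTop Filter.atTop :=
      Filter.tendsto_pow_atTop (by norm_num)
    simpa [one_div, Pi.inv_def] using h.inv_tendsto_atTop
  have hden : Filter.Tendsto
      (fun s : ℝ => 1 + 2 / s ^ 2 * (inner ℝ x y : ℝ) + 1 / s ^ 4 * ‖x‖ ^ 2 * ‖y‖ ^ 2)
      Filter.atTop (nhds 1) := by
    have base := (((tendsto_const_nhds (x := (1:ℝ)) (f := (Filter.atTop : Filter ℝ))).add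
      ((h2.const_mul 2).mul_const (inner ℝ x y : ℝ))).add
      ((h4.mul_const (‖x‖ ^ 2)).mul_const (‖y‖ ^ 2)))
    exact ((by simpa using base : Filter.Tendsto
      (fun s : ℝ => 1 + 2 * (1 / s ^ 2) * (inner ℝ x y : ℝ) + 1 / s ^ 4 * ‖x‖ ^ 2 * ‖y‖ ^ 2)
      Filter.atTop (nhds 1))).congr (fun s => by ring)
  have hnum1 : Filter.Tendsto
      (fun s : ℝ => 1 + 2 / s ^ 2 * (inner ℝ x y : ℝ) + 1 / s ^ 2 * ‖y‖ ^ 2)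
      Filter.atTop (nhds 1) := by
    have base := (((tendsto_const_nhds (x := (1:ℝ)) (f := (Filter.atTop : Filter ℝ))).add
      ((h2.const_mul 2).mul_const (inner ℝ x y : ℝ))).add (h2.mul_const (‖y‖ ^ 2)))
    exact ((by simpa using base : Filter.Tendsto
      (fun s : ℝ => 1 + 2 * (1 / s ^ 2) * (inner ℝ x y : ℝ) + 1 / s ^ 2 * ‖y‖ ^ 2)
      Filter.atTop (nhds 1))).congr (fun s => by ring)
  have hnum2 : Filter.Tendsto (fun s : ℝ => 1 - 1 / s ^ 2 * ‖x‖ ^ 2)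
      Filter.atTop (nhds 1) := by
    have := (tendsto_const_nhds (x := (1:ℝ)) (f := (Filter.atTop : Filter ℝ))).sub
      (h2.mul_const (‖x‖ ^ 2))
    simpa using this
  have ha : Filter.Tendsto (fun s : ℝ =>
      (1 + 2 / s ^ 2 * (inner ℝ x y : ℝ) + 1 / s ^ 2 * ‖y‖ ^ 2) /
      (1 + 2 / s ^ 2 * (inner ℝ x y : ℝ) + 1 / s ^ 4 * ‖x‖ ^ 2 * ‖y‖ ^ 2))
      Filter.atTop (nhds 1) := by
    simpa [Pi.div_def] using hnum1.div hden one_ne_zero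
  have hb : Filter.Tendsto (fun s : ℝ =>
      (1 - 1 / s ^ 2 * ‖x‖ ^ 2) /
      (1 + 2 / s ^ 2 * (inner ℝ x y : ℝ) + 1 / s ^ 4 * ‖x‖ ^ 2 * ‖y‖ ^ 2))
      Filter.atTop (nhds 1) := by
    simpa [Pi.div_def] using hnum2.div hden one_ne_zero
  have : Filter.Tendsto (fun s : ℝ => mobiusAdd s x y) Filter.atTop
      (nhds ((1:ℝ) • x + (1:ℝ) • y)) := by
    exact (ha.smul_const x).add (hb.smul_const y)
  simpa using this
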